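/- Let x, y, s, t be integers such that x^2 - 1 - s^2 - s^4 = t^2 and y^2 - 1 - t^2 - t^4 = -s^2. Then (x,y,s,t) = (±1, ±1, 0, 0). -/
import Mathlib

lemma squeeze (n m : ℤ) (hn : 0 ≤ n) (h : n^2 < m^2) : (n+1)^2 ≤ m^2 := by
  have h1 : n < |m| := by
    nlinarith [sq_abs m, abs_nonneg m]
  have h2 : n + 1 ≤ |m| := h1
  calc (n+1)^2 ≤ |m|^2 := by nlinarith [abs_nonneg m]
    _ = m^2 := sq_abs m

theorem stmt_14 (x y s t : ℤ)
    (h1 : x^2 - 1 - s^2 - s^4 = t^2) (h2 : y^2 - 1 - t^2 - t^4 = -s^2) :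
    (x = 1 ∨ x = -1) ∧ (y = 1 ∨ y = -1) ∧ s = 0 ∧ t = 0 := by
  have hs2 : (0:ℤ) ≤ s^2 := sq_nonneg s
  have ht2 : (0:ℤ) ≤ t^2 := sq_nonneg t
  -- x^2 > (s^2)^2
  have hx : (s^2)^2 < x^2 := by nlinarith
  have hx' := squeeze (s^2) x hs2 hx
  -- gives s^2 ≤ t^2
  have hst : s^2 ≤ t^2 := by nlinarith
  -- show s^2 = t^2
  have heq : s^2 = t^2 := by
    by_contra hne
    have hlt : s^2 < t^2 := lt_of_le_of_ne hst hne
    have hy : (t^2)^2 < y^2 := by nlinarith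
    have hy' := squeeze (t^2) y ht2 hy
    nlinarith
  -- now y^2 = t^4 + 1
  have ht0 : t = 0 := by
    by_contra htne
    have hpos : 0 < t^2 := by positivity
    have hy : (t^2)^2 < y^2 := by nlinarith
    have hy' := squeeze (t^2) y ht2 hy
    nlinarith
  have hs0 : s = 0 := by
    have : s^2 = 0 := by rw [heq, ht0]; ring
    exact pow_eq_zero_iff (n := 2) (by norm_num) |>.mp this
  subst ht0 hs0
  have hx1 : (x-1)*(x+1) = 0 := by nlinarith
  have hy1 : (y-1)*(y+1) = 0 := by nlinarith
  refine ⟨?_, ?_, rfl, rfl⟩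
  · rcases mul_eq_zero.mp hx1 with h | h
    · left; linarith
    · right; linarith
  · rcases mul_eq_zero.mp hy1 with h | h
    · left; linarith
    · right; linarith
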